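/- If two indices i,j are drawn independently and uniformly from {1,...,n} and x' is obtained from x by a gossip average between i and j, then E[Var(x') | x] = (1 - 1/n)·Var(x), where Var(x) = (1/n)∑(x_k - x̄)² is the empirical variance. -/

import Mathlib

open Finset

noncomputable def mean {n : ℕ} (v : Fin n → ℝ) : ℝ := (∑ k, v k) / n

/-- Empirical variance. -/
noncomputable def empVar {n : ℕ} (v : Fin n → ℝ) : ℝ := (∑ k, (v k - mean v) ^ 2) / n

noncomputable def gossip {n : ℕ} (v : Fin n → ℝ) (i j : Fin n) : Fin n → ℝ :=
  fun k => if k = i ∨ k = j then (v i + v j) / 2 else v k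

lemma sum_diff_two {n : ℕ} (i j : Fin n) (hij : i ≠ j) (d : Fin n → ℝ)
    (h : ∀ k, k ≠ i → k ≠ j → d k = 0) : ∑ k, d k = d i + d j := by
  rw [← Finset.sum_subset (Finset.subset_univ ({i, j} : Finset (Fin n)))
    (fun k _ hk => by
      simp only [Finset.mem_insert, Finset.mem_singleton, not_or] at hk
      exact h k hk.1 hk.2)]
  exact Finset.sum_pair hij

lemma gossip_self {n : ℕ} (x : Fin n → ℝ) (i : Fin n) : gossip x i i = x := by
  funext k
  simp only [gossip, or_self]
  split <;> simp_all

lemma key {n : ℕ} (hn : 0 < n) (x : Fin n → ℝ) (i j : Fin n) :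
    empVar (gossip x i j) = empVar x - (x i - x j) ^ 2 / (2 * n) := by
  have hn' : (n : ℝ) ≠ 0 := Nat.cast_ne_zero.mpr hn.ne'
  by_cases hij : i = j
  · subst hij; rw [gossip_self]; ring
  · have hgi : gossip x i j i = (x i + x j) / 2 := by simp [gossip]
    have hgj : gossip x i j j = (x i + x j) / 2 := by simp [gossip]
    have hgk : ∀ k, k ≠ i → k ≠ j → gossip x i j k = x k := by
      intro k h1 h2; simp [gossip, h1, h2]
    have hsum : ∑ k, (gossip x i j k - x k) = 0 := by
      rw [sum_diff_two i j hij _ (fun k h1 h2 => by rw [hgk k h1 h2]; ring)]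
      rw [hgi, hgj]; ring
    have hmean : mean (gossip x i j) = mean x := by
      unfold mean
      congr 1
      have := Finset.sum_sub_distrib (f := gossip x i j) (g := x) (s := univ)
      rw [this] at hsum
      linarith
    set m := mean x with hm
    have hsq : ∑ k, ((gossip x i j k - m) ^ 2 - (x k - m) ^ 2)
        = -((x i - x j) ^ 2 / 2) := by
      rw [sum_diff_two i j hij _ (fun k h1 h2 => by rw [hgk k h1 h2]; ring)]
      rw [hgi, hgj]; ring
    rw [Finset.sum_sub_distrib] at hsq
    unfold empVar
    rw [hmean, ← hm]
    have h2 : ∑ k, (gossip x i j k - m) ^ 2 = ∑ k, (x k - m) ^ 2 - (x i - x j) ^ 2 / 2 := by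
      linarith
    rw [h2]
    field_simp

theorem gossip_expected_var (n : ℕ) (hn : 0 < n) (x : Fin n → ℝ) :
    (∑ i, ∑ j, empVar (gossip x i j)) / (n : ℝ) ^ 2 = (1 - 1 / n) * empVar x := by
  have hn' : (n : ℝ) ≠ 0 := Nat.cast_ne_zero.mpr hn.ne'
  simp only [key hn x]
  set S1 := ∑ k, x k with hS1
  set S2 := ∑ k, x k ^ 2 with hS2
  have hd : ∑ i, ∑ j, (x i - x j) ^ 2 = 2 * n * S2 - 2 * S1 ^ 2 := by
    have h1 : ∀ i j : Fin n, (x i - x j) ^ 2 = x i ^ 2 - 2 * (x i * x j) + x j ^ 2 :=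
      fun i j => by ring
    simp only [h1, Finset.sum_add_distrib, Finset.sum_sub_distrib, Finset.sum_const,
      card_univ, Fintype.card_fin, nsmul_eq_mul, ← Finset.mul_sum, ← Finset.sum_mul,
      ← hS1, ← hS2]
    ring
  have hv : empVar x = S2 / n - (S1 / n) ^ 2 := by
    unfold empVar mean
    have h1 : ∀ k, (x k - S1 / n) ^ 2 = x k ^ 2 - 2 * (S1 / n) * x k + (S1 / n) ^ 2 :=
      fun k => by ring
    rw [← hS1]
    simp only [h1, Finset.sum_add_distrib, Finset.sum_sub_distrib, ← Finset.mul_sum,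
      Finset.sum_const, card_univ, Fintype.card_fin, nsmul_eq_mul, ← hS1, ← hS2]
    field_simp
    ring
  have h2 : ∑ i, ∑ j, (empVar x - (x i - x j) ^ 2 / (2 * n))
      = (n : ℝ) ^ 2 * empVar x - (2 * n * S2 - 2 * S1 ^ 2) / (2 * n) := by
    simp only [Finset.sum_sub_distrib, Finset.sum_const, card_univ, Fintype.card_fin,
      nsmul_eq_mul, ← Finset.sum_div]
    rw [hd]
    ring
  rw [h2, hv]
  field_simp
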